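/- arXiv:2106.10308 — 6 statements merged into one kernel-verified Lean document; each statement's English description precedes it below -/
import Mathlib

section
/- Let n ≥ 4 be an integer and f ∈ ℚ[X] an irreducible polynomial of degree n; let L be a splitting field of f over ℚ and α ∈ L a root of f. If the image of the Galois group Gal(L/ℚ) in the permutation group of the set of roots of f in L is either the full symmetric group of the root set or its alternating group, then the extension ℚ(α)/ℚ has no proper intermediate subfields except ℚ (every intermediate field of ℚ(α)/ℚ equals ℚ or ℚ(α)). -/
/-- The natural action of the Galois group `Gal(L/ℚ) = (L ≃ₐ[ℚ] L)` on the set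
of roots of a polynomial `f ∈ ℚ[X]` in `L`. -/
noncomputable instance galRootAction (f : Polynomial ℚ) (L : Type) [Field L] [Algebra ℚ L] :
    MulAction (L ≃ₐ[ℚ] L) (f.rootSet L) where
  smul σ x := ⟨σ x.1, by
    have hx := x.2
    rw [Polynomial.mem_rootSet] at hx ⊢
    refine ⟨hx.1, ?_⟩
    have h : Polynomial.aeval (σ x.1) f = σ (Polynomial.aeval x.1 f) :=
      Polynomial.aeval_algHom_apply (σ : L →ₐ[ℚ] L) x.1 f
    rw [h, hx.2, map_zero]⟩
  one_smul x := Subtype.ext rfl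
  mul_smul σ τ x := Subtype.ext rfl

theorem galRootAction_smul_coe (f : Polynomial ℚ) (L : Type) [Field L] [Algebra ℚ L]
    (σ : L ≃ₐ[ℚ] L) (x : f.rootSet L) : ((σ • x : f.rootSet L) : L) = σ x.1 := rfl

/-- Let `n ≥ 4` and `f ∈ ℚ[X]` irreducible of degree `n`, `L` a
splitting field of `f` over `ℚ`, `α ∈ L` a root of `f`. If the image of
`Gal(L/ℚ)` in the permutation group of the set of roots of `f` in `L` is the
full symmetric group or the alternating group, then `ℚ(α)/ℚ` has no proper
intermediate subfields except `ℚ`. -/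
theorem no_intermediate_subfields_of_symmetric_or_alternating
    (f : Polynomial ℚ) (hf : Irreducible f) (hdeg : 4 ≤ f.natDegree)
    (L : Type) [Field L] [Algebra ℚ L] [DecidableEq L]
    [Polynomial.IsSplittingField ℚ L f]
    (α : L) (hα : Polynomial.aeval α f = 0)
    (hgal : (MulAction.toPermHom (L ≃ₐ[ℚ] L) (f.rootSet L)).range = ⊤ ∨
      (MulAction.toPermHom (L ≃ₐ[ℚ] L) (f.rootSet L)).range =
        alternatingGroup (f.rootSet L)) :
    ∀ K : IntermediateField ℚ L, K ≤ IntermediateField.adjoin ℚ {α} →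
      K = ⊥ ∨ K = IntermediateField.adjoin ℚ {α} := by
  intro K hK
  have hfsep : f.Separable := hf.separable
  have hFD : FiniteDimensional ℚ L := Polynomial.IsSplittingField.finiteDimensional L f
  have hGalois : IsGalois ℚ L := IsGalois.of_separable_splitting_field hfsep
  -- the alternating group is contained in the image of the Galois group
  have hA : alternatingGroup (f.rootSet L) ≤
      (MulAction.toPermHom (L ≃ₐ[ℚ] L) (f.rootSet L)).range := by
    rcases hgal with h | h
    · rw [h]; exact le_top
    · rw [h]
  -- the root set has at least 4 elements
  have hcard : 4 ≤ Fintype.card (f.rootSet L) := by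
    rw [Polynomial.card_rootSet_eq_natDegree hfsep (Polynomial.IsSplittingField.splits L f)]
    exact hdeg
  -- α as an element of the root set
  have hαmem : α ∈ f.rootSet L :=
    Polynomial.mem_rootSet.2 ⟨hf.ne_zero, hα⟩
  set α' : f.rootSet L := ⟨α, hαmem⟩ with hα'
  set Kα := IntermediateField.adjoin ℚ ({α} : Set L) with hKα
  -- characterization of the fixing subgroup of ℚ(α)
  have hfix : ∀ σ : L ≃ₐ[ℚ] L, σ ∈ Kα.fixingSubgroup ↔ σ α = α := by
    intro σ
    rw [IntermediateField.mem_fixingSubgroup_iff]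
    constructor
    · intro h
      exact h α (IntermediateField.mem_adjoin_simple_self ℚ α)
    · intro h x hx
      induction hx using IntermediateField.adjoin_induction with
      | mem y hy => rw [Set.mem_singleton_iff.1 hy]; exact h
      | algebraMap y => exact σ.commutes y
      | add y z _ _ hy hz => rw [map_add, hy, hz]
      | inv y _ hy => rw [map_inv₀, hy]
      | mul y z _ _ hy hz => rw [map_mul, hy, hz]
  -- the fixing subgroup of ℚ(α) is maximal (or the whole group)
  have hmax : ∀ H : Subgroup (L ≃ₐ[ℚ] L), Kα.fixingSubgroup ≤ H →
      H = Kα.fixingSubgroup ∨ H = ⊤ := by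
    intro H hH
    by_cases heq : H = Kα.fixingSubgroup
    · exact Or.inl heq
    right
    -- there is h ∈ H moving α
    obtain ⟨h, hhH, hhα⟩ : ∃ h ∈ H, ¬ h α = α := by
      by_contra hcon
      push_neg at hcon
      exact heq (le_antisymm (fun g hg => (hfix g).2 (hcon g hg)) hH)
    rw [Subgroup.eq_top_iff']
    intro g
    -- find k ∈ Stab(α) ∩ (something) with k • (h • α') = g • α'
    set b : f.rootSet L := h • α' with hb
    set β : f.rootSet L := g • α' with hβ
    have hbne : b ≠ α' := fun hc => hhα (congrArg Subtype.val hc)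
    by_cases hβα : β = α'
    · -- g fixes α
      have : g ∈ Kα.fixingSubgroup := (hfix g).2 (congrArg Subtype.val hβα)
      exact hH this
    -- find an even permutation π fixing α' with π b = β
    have hπ : ∃ π : Equiv.Perm (f.rootSet L), π ∈ alternatingGroup (f.rootSet L) ∧
        π α' = α' ∧ π b = β := by
      by_cases hbβ : b = β
      · exact ⟨1, one_mem _, rfl, by rw [hbβ]; rfl⟩
      · -- pick d distinct from α', b, β
        obtain ⟨d, hd⟩ : ∃ d : f.rootSet L, d ∉ ({α', b, β} : Finset (f.rootSet L)) := by
          by_contra hcon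
          push_neg at hcon
          have huniv : ({α', b, β} : Finset (f.rootSet L)) = Finset.univ :=
            Finset.eq_univ_iff_forall.2 hcon
          have h3 : Fintype.card (f.rootSet L) ≤ 3 := by
            rw [← Finset.card_univ, ← huniv]
            calc ({α', b, β} : Finset (f.rootSet L)).card
                ≤ ({b, β} : Finset (f.rootSet L)).card + 1 := Finset.card_insert_le _ _
              _ ≤ (({β} : Finset (f.rootSet L)).card + 1) + 1 := by
                  exact Nat.add_le_add_right (Finset.card_insert_le _ _) 1
              _ = 3 := by rw [Finset.card_singleton]
          omega
        simp only [Finset.mem_insert, Finset.mem_singleton, not_or] at hd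
        obtain ⟨hdα, hdb, hdβ⟩ := hd
        refine ⟨Equiv.swap d β * Equiv.swap d b, ?_, ?_, ?_⟩
        · rw [Equiv.Perm.mem_alternatingGroup, Equiv.Perm.sign_mul,
            Equiv.Perm.sign_swap hdβ, Equiv.Perm.sign_swap hdb]
          decide
        · simp only [Equiv.Perm.mul_apply]
          rw [Equiv.swap_apply_of_ne_of_ne (Ne.symm hdα) (fun hc => hbne hc.symm),
            Equiv.swap_apply_of_ne_of_ne (Ne.symm hdα) (fun hc => hβα hc.symm)]
        · simp only [Equiv.Perm.mul_apply]
          rw [Equiv.swap_apply_right, Equiv.swap_apply_left]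
    obtain ⟨π, hπA, hπα, hπb⟩ := hπ
    obtain ⟨k, hk⟩ := hA hπA
    -- k fixes α and k • b = β
    have hkα : k ∈ Kα.fixingSubgroup := by
      apply (hfix k).2
      have h1 : (k • α' : f.rootSet L) = π α' := by rw [← hk]; rfl
      exact congrArg Subtype.val (h1.trans hπα)
    have hkb : (k • b : f.rootSet L) = β := by
      have h1 : (k • b : f.rootSet L) = π b := by rw [← hk]; rfl
      exact h1.trans hπb
    -- hence (k * h) • α' = β = g • α', so (k*h)⁻¹ * g fixes α
    have hkh : ((k * h) • α' : f.rootSet L) = g • α' := by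
      rw [mul_smul, ← hb, hkb, hβ]
    have hstab : (k * h)⁻¹ * g ∈ Kα.fixingSubgroup := by
      apply (hfix _).2
      have : (((k * h)⁻¹ * g) • α' : f.rootSet L) = α' := by
        rw [mul_smul, ← hkh, inv_smul_smul]
      exact congrArg Subtype.val this
    have hkhH : k * h ∈ H := mul_mem (hH hkα) hhH
    have := mul_mem hkhH (hH hstab)
    rwa [← mul_assoc, mul_inv_cancel, one_mul] at this
  -- Galois correspondence
  have hle : Kα.fixingSubgroup ≤ K.fixingSubgroup := fun σ hσ => by
    rw [IntermediateField.mem_fixingSubgroup_iff] at hσ ⊢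
    exact fun x hx => hσ x (hK hx)
  rcases hmax K.fixingSubgroup hle with h | h
  · right
    have := IsGalois.fixedField_fixingSubgroup (F := ℚ) (E := L) K
    rw [h] at this
    rw [← this, IsGalois.fixedField_fixingSubgroup Kα]
  · left
    have := IsGalois.fixedField_fixingSubgroup (F := ℚ) (E := L) K
    rw [h, ← (IntermediateField.fixingSubgroup_bot :
        (⊥ : IntermediateField ℚ L).fixingSubgroup = ⊤),
      IsGalois.fixedField_fixingSubgroup (⊥ : IntermediateField ℚ L)] at this
    exact this.symm
end

section
/- Let (l, p, b, c) be a g-admissible quadruple for an integer g ≥ 2. Then the polynomial f_g(x) = x^{2g} − b·x − (p·c)/l^l is irreducible in ℚ[x]. -/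
open Polynomial

/-- If every term of a finite sum has `l`-adic valuation `> c` (or is zero), then the sum
is zero or has valuation `> c`. -/
private lemma padic_sum_tail {l : ℕ} [Fact l.Prime] {ι : Type*} (c : ℤ) :
    ∀ (t : Finset ι) (F : ι → ℚ), (∀ j ∈ t, F j = 0 ∨ c < padicValRat l (F j)) →
    (t.sum F = 0 ∨ c < padicValRat l (t.sum F)) := by
  classical
  intro t
  induction t using Finset.induction_on with
  | empty => intro F _; simp
  | @insert a s ha ih =>
    intro F h
    rw [Finset.sum_insert ha]
    have hFa := h a (Finset.mem_insert_self a s)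
    have hs := ih F (fun j hj => h j (Finset.mem_insert_of_mem hj))
    rcases hFa with h0 | hva
    · rw [h0, zero_add]; exact hs
    rcases hs with hs0 | hvs
    · rw [hs0, add_zero]; right; exact hva
    by_cases hsum : F a + s.sum F = 0
    · left; exact hsum
    · right
      calc c < min (padicValRat l (F a)) (padicValRat l (s.sum F)) := lt_min hva hvs
        _ ≤ padicValRat l (F a + s.sum F) := padicValRat.min_le_padicValRat_add hsum

/-- A finite sum with a unique term of strictly minimal `l`-adic valuation is nonzero and
has that valuation. -/
private lemma padic_val_sum_eq {l : ℕ} [Fact l.Prime] {ι : Type*} [DecidableEq ι]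
    (s : Finset ι) (F : ι → ℚ) (i0 : ι) (hi0 : i0 ∈ s) (h0 : F i0 ≠ 0)
    (h : ∀ j ∈ s, j ≠ i0 → F j = 0 ∨ padicValRat l (F i0) < padicValRat l (F j)) :
    s.sum F ≠ 0 ∧ padicValRat l (s.sum F) = padicValRat l (F i0) := by
  have hsum : s.sum F = F i0 + (s.erase i0).sum F := by
    rw [Finset.add_sum_erase _ _ hi0]
  by_cases ht : (s.erase i0).sum F = 0
  · rw [hsum, ht, add_zero]; exact ⟨h0, rfl⟩
  · have htail := padic_sum_tail (l := l) (padicValRat l (F i0)) (s.erase i0) F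
      (fun j hj => h j (Finset.mem_of_mem_erase hj) (Finset.ne_of_mem_erase hj))
    rcases htail with h0' | hlt
    · exact absurd h0' ht
    have hne : F i0 + (s.erase i0).sum F ≠ 0 := by
      intro hz
      have hneg : (s.erase i0).sum F = -F i0 := by linarith [hz]
      rw [hneg, padicValRat.neg] at hlt
      exact lt_irrefl _ hlt
    refine ⟨hsum ▸ hne, ?_⟩
    rw [hsum]
    exact padicValRat.add_eq_of_lt hne h0 ht hlt

/-- Key Gauss-lemma-style step for the weighted valuation
`W w i = n * v_l(coeff w i) - l * i`: if `mu` and `mv` are the (attained) minima of the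
weights of `u` and `v`, then some coefficient of `u * v` is nonzero with weight `≤ mu + mv`. -/
private lemma key_index {l : ℕ} [Fact l.Prime] (n : ℕ) (hn : 0 < n)
    (u v : ℚ[X]) (mu mv : ℤ)
    (hu : ∃ i, u.coeff i ≠ 0 ∧ (n : ℤ) * padicValRat l (u.coeff i) - l * i = mu)
    (hu' : ∀ i, u.coeff i ≠ 0 → mu ≤ (n : ℤ) * padicValRat l (u.coeff i) - l * i)
    (hv : ∃ j, v.coeff j ≠ 0 ∧ (n : ℤ) * padicValRat l (v.coeff j) - l * j = mv)
    (hv' : ∀ j, v.coeff j ≠ 0 → mv ≤ (n : ℤ) * padicValRat l (v.coeff j) - l * j) :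
    ∃ k, (u * v).coeff k ≠ 0 ∧
      (n : ℤ) * padicValRat l ((u * v).coeff k) - l * k ≤ mu + mv := by
  classical
  set P : ℕ → Prop := fun i => u.coeff i ≠ 0 ∧ (n : ℤ) * padicValRat l (u.coeff i) - l * i = mu
    with hP
  set Q : ℕ → Prop := fun j => v.coeff j ≠ 0 ∧ (n : ℤ) * padicValRat l (v.coeff j) - l * j = mv
    with hQ
  have hPex : ∃ i, P i := hu
  have hQex : ∃ j, Q j := hv
  set i0 := Nat.find hPex with hi0def
  set j0 := Nat.find hQex with hj0def
  obtain ⟨hu0, hWu0⟩ := Nat.find_spec hPex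
  obtain ⟨hv0, hWv0⟩ := Nat.find_spec hQex
  refine ⟨i0 + j0, ?_⟩
  rw [Polynomial.coeff_mul]
  set F : ℕ × ℕ → ℚ := fun x => u.coeff x.1 * v.coeff x.2 with hF
  have hmem : (i0, j0) ∈ Finset.HasAntidiagonal.antidiagonal (i0 + j0) := by
    simp [Finset.HasAntidiagonal.mem_antidiagonal]
  have hF0 : F (i0, j0) ≠ 0 := mul_ne_zero hu0 hv0
  have hvalF0 : padicValRat l (F (i0, j0)) =
      padicValRat l (u.coeff i0) + padicValRat l (v.coeff j0) :=
    padicValRat.mul hu0 hv0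
  have hmain : ∀ x ∈ Finset.HasAntidiagonal.antidiagonal (i0 + j0), x ≠ (i0, j0) →
      F x = 0 ∨ padicValRat l (F (i0, j0)) < padicValRat l (F x) := by
    rintro ⟨i, j⟩ hx hne
    rw [Finset.HasAntidiagonal.mem_antidiagonal] at hx
    by_cases hui : u.coeff i = 0
    · left; simp [hF, hui]
    by_cases hvj : v.coeff j = 0
    · left; simp [hF, hvj]
    right
    have hvalF : padicValRat l (F (i, j)) =
        padicValRat l (u.coeff i) + padicValRat l (v.coeff j) :=
      padicValRat.mul hui hvj
    have hbu : mu ≤ (n : ℤ) * padicValRat l (u.coeff i) - l * i := hu' i hui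
    have hbv : mv ≤ (n : ℤ) * padicValRat l (v.coeff j) - l * j := hv' j hvj
    -- one of the two bounds is strict
    have hstrict : mu + mv < ((n : ℤ) * padicValRat l (u.coeff i) - l * i) +
        ((n : ℤ) * padicValRat l (v.coeff j) - l * j) := by
      rcases lt_trichotomy i i0 with hlt | heq | hgt
      · have : ¬ P i := Nat.find_min hPex hlt
        have hne' : (n : ℤ) * padicValRat l (u.coeff i) - l * i ≠ mu := by
          intro h; exact this ⟨hui, h⟩
        have : mu < (n : ℤ) * padicValRat l (u.coeff i) - l * i :=
          lt_of_le_of_ne hbu (Ne.symm hne')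
        omega
      · have hj : j < j0 := by
          subst heq
          rcases Nat.lt_or_ge j j0 with h | h
          · exact h
          · exfalso; apply hne; have : j = j0 := by omega
            simp [this]
        have : ¬ Q j := Nat.find_min hQex hj
        have hne' : (n : ℤ) * padicValRat l (v.coeff j) - l * j ≠ mv := by
          intro h; exact this ⟨hvj, h⟩
        have : mv < (n : ℤ) * padicValRat l (v.coeff j) - l * j :=
          lt_of_le_of_ne hbv (Ne.symm hne')
        omega
      · have hj : j < j0 := by omega
        have : ¬ Q j := Nat.find_min hQex hj
        have hne' : (n : ℤ) * padicValRat l (v.coeff j) - l * j ≠ mv := by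
          intro h; exact this ⟨hvj, h⟩
        have : mv < (n : ℤ) * padicValRat l (v.coeff j) - l * j :=
          lt_of_le_of_ne hbv (Ne.symm hne')
        omega
    -- translate to valuations
    have hij : (i : ℤ) + j = (i0 : ℤ) + j0 := by exact_mod_cast congrArg (Nat.cast : ℕ → ℤ) hx
    have hmul : (n : ℤ) * (padicValRat l (F (i0, j0))) < n * (padicValRat l (F (i, j))) := by
      rw [hvalF0, hvalF]
      have := hstrict
      rw [← hWu0, ← hWv0] at this
      -- this : Wu i0 + Wv j0 < Wu i + Wv j ; add l*(i+j) = l*(i0+j0) to both sides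
      nlinarith [this, hij]
    exact lt_of_mul_lt_mul_left hmul (by positivity)
  obtain ⟨hsne, hsval⟩ := padic_val_sum_eq (l := l) (Finset.HasAntidiagonal.antidiagonal (i0 + j0))
    F (i0, j0) hmem hF0 hmain
  refine ⟨hsne, ?_⟩
  rw [hsval, hvalF0]
  push_cast
  rw [← hWu0, ← hWv0]
  ring_nf
  nlinarith [hWu0, hWv0]

set_option maxHeartbeats 1000000 in
/-- For a `g`-admissible quadruple `(l, p, b, c)` (with `g ≥ 2`),
the polynomial `f_g(x) = x^(2g) - b·x - (p·c)/l^l` is irreducible in `ℚ[x]`. -/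
theorem mori_polynomial_irreducible (g : ℕ) (hg : 2 ≤ g)
    (l p : ℕ) (hl : l.Prime) (hp : p.Prime)
    (hldvd : l ∣ 2 * g - 1) (hpmod : p ≡ 1 [MOD 2 * g - 1])
    (b c : ℤ) (hbl : ¬ (l : ℤ) ∣ b)
    (hbord : orderOf ((b : ZMod p)) = p - 1)
    (hcl : ¬ (l : ℤ) ∣ c) :
    Irreducible (Polynomial.X ^ (2 * g) - Polynomial.C (b : ℚ) * Polynomial.X
      - Polynomial.C (((p : ℚ) * (c : ℚ)) / (l : ℚ) ^ l)) := by
  classical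
  haveI : Fact l.Prime := ⟨hl⟩
  set n := 2 * g with hn
  have hn4 : 4 ≤ n := by omega
  have hn0 : n ≠ 0 := by omega
  have hn1 : n ≠ 1 := by omega
  have hl1 : 1 < l := hl.one_lt
  -- l does not divide p
  have hlp : ¬ l ∣ p := by
    intro hdvd
    have h1 : p ≡ 1 [MOD l] := Nat.ModEq.of_dvd hldvd hpmod
    obtain ⟨k, rfl⟩ := hdvd
    have h2 : l * k % l = 1 % l := h1
    rw [Nat.mul_mod_right, Nat.mod_eq_of_lt hl1] at h2
    omega
  -- l does not divide n
  have hln : ¬ l ∣ n := by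
    intro hdvd
    have h1 : l ∣ n - (2 * g - 1) := Nat.dvd_sub hdvd hldvd
    have : n - (2 * g - 1) = 1 := by omega
    rw [this] at h1
    have := Nat.dvd_one.mp h1
    omega
  -- nonvanishing of the various constants
  have hp0 : (p : ℚ) ≠ 0 := Nat.cast_ne_zero.mpr hp.ne_zero
  have hc0' : c ≠ 0 := by rintro rfl; exact hcl (dvd_zero _)
  have hb0' : b ≠ 0 := by rintro rfl; exact hbl (dvd_zero _)
  have hcq : (c : ℚ) ≠ 0 := Int.cast_ne_zero.mpr hc0'
  have hbq : (b : ℚ) ≠ 0 := Int.cast_ne_zero.mpr hb0'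
  have hlq : (l : ℚ) ≠ 0 := Nat.cast_ne_zero.mpr hl.ne_zero
  have hlpow : (l : ℚ) ^ l ≠ 0 := pow_ne_zero _ hlq
  -- valuations of the constants
  have vp : padicValRat l (p : ℚ) = 0 := by
    have h2 : ¬ ((l : ℤ) ∣ (p : ℤ)) := by exact_mod_cast hlp
    have h1 : (p : ℚ) = ((p : ℤ) : ℚ) := by push_cast; ring
    rw [h1, padicValRat.of_int, padicValInt.eq_zero_of_not_dvd h2, Nat.cast_zero]
  have vc : padicValRat l (c : ℚ) = 0 := by
    rw [show ((c : ℚ)) = ((c : ℤ) : ℚ) from rfl, padicValRat.of_int,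
      padicValInt.eq_zero_of_not_dvd hcl, Nat.cast_zero]
  have vb : padicValRat l (b : ℚ) = 0 := by
    rw [show ((b : ℚ)) = ((b : ℤ) : ℚ) from rfl, padicValRat.of_int,
      padicValInt.eq_zero_of_not_dvd hbl, Nat.cast_zero]
  have vlpow : padicValRat l ((l : ℚ) ^ l) = l := by
    rw [padicValRat.pow (l : ℚ), padicValRat.self hl1, mul_one]
  set a : ℚ := ((p : ℚ) * (c : ℚ)) / (l : ℚ) ^ l with ha
  have ha0 : a ≠ 0 := div_ne_zero (mul_ne_zero hp0 hcq) hlpow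
  have va : padicValRat l a = -(l : ℤ) := by
    rw [ha, padicValRat.div (mul_ne_zero hp0 hcq) hlpow,
      padicValRat.mul hp0 hcq, vp, vc, vlpow]
    ring
  set f : ℚ[X] := X ^ n - C (b : ℚ) * X - C a with hf
  -- coefficients of f
  have hc0 : f.coeff 0 = -a := by
    simp [hf, coeff_X_pow, Ne.symm hn0]
  have hc1 : f.coeff 1 = -(b : ℚ) := by
    simp [hf, coeff_X_pow, Ne.symm hn1]
  have hcn : f.coeff n = 1 := by
    simp [hf, coeff_X_pow, coeff_C, coeff_X, hn0, hn1, Ne.symm hn1]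
  have hother : ∀ k, k ≠ 0 → k ≠ 1 → k ≠ n → f.coeff k = 0 := by
    intro k hk0 hk1 hkn
    simp [hf, coeff_X_pow, coeff_C, hkn, coeff_X, hk0, hk1, Ne.symm hk1]
  -- degree of f
  have htail : (C (b : ℚ) * X + C a).degree < (n : WithBot ℕ) := by
    refine lt_of_le_of_lt (Polynomial.degree_add_le _ _) ?_
    have h1 : (C (b : ℚ) * X).degree ≤ 1 := Polynomial.degree_C_mul_X_le _
    have h2 : (C a).degree ≤ 0 := Polynomial.degree_C_le
    have h3 : (1 : WithBot ℕ) < (n : WithBot ℕ) := by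
      exact_mod_cast (by omega : (1 : ℕ) < n)
    exact max_lt (lt_of_le_of_lt h1 h3)
      (lt_of_le_of_lt h2 (lt_of_le_of_lt (by norm_num) h3))
  have hfeq : f = X ^ n - (C (b : ℚ) * X + C a) := by rw [hf]; ring
  have hdegf : f.degree = n := by
    rw [hfeq, Polynomial.degree_sub_eq_left_of_degree_lt]
    · exact Polynomial.degree_X_pow n
    · rwa [Polynomial.degree_X_pow]
  have hnatdegf : f.natDegree = n := Polynomial.natDegree_eq_of_degree_eq_some hdegf
  have hmon : f.Monic := by
    unfold Polynomial.Monic Polynomial.leadingCoeff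
    rw [hnatdegf, hcn]
  have hfne : f ≠ 0 := hmon.ne_zero
  -- suppose f is reducible
  by_contra hni
  have hnotunit : ¬ IsUnit f := by
    apply Polynomial.not_isUnit_of_natDegree_pos
    omega
  rw [irreducible_iff] at hni
  push_neg at hni
  obtain ⟨u, v, heq, hu, hv⟩ := hni hnotunit
  have hu0 : u ≠ 0 := by rintro rfl; rw [zero_mul] at heq; exact hfne heq
  have hv0 : v ≠ 0 := by rintro rfl; rw [mul_zero] at heq; exact hfne heq
  have hdsum : u.natDegree + v.natDegree = n := by
    rw [← Polynomial.natDegree_mul hu0 hv0, ← heq, hnatdegf]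
  have hud : u.natDegree ≠ 0 := by
    intro h
    apply hu
    rw [Polynomial.eq_C_of_natDegree_eq_zero h]
    refine Polynomial.isUnit_C.mpr (isUnit_iff_ne_zero.mpr ?_)
    intro h0
    apply hu0
    rw [Polynomial.eq_C_of_natDegree_eq_zero h, h0, map_zero]
  have hvd : v.natDegree ≠ 0 := by
    intro h
    apply hv
    rw [Polynomial.eq_C_of_natDegree_eq_zero h]
    refine Polynomial.isUnit_C.mpr (isUnit_iff_ne_zero.mpr ?_)
    intro h0
    apply hv0
    rw [Polynomial.eq_C_of_natDegree_eq_zero h, h0, map_zero]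
  -- normalize to monic factors
  set α := u.leadingCoeff with hα
  have hα0 : α ≠ 0 := Polynomial.leadingCoeff_ne_zero.mpr hu0
  set U := C α⁻¹ * u with hU
  set V := C α * v with hV
  have hUV : U * V = f := by
    rw [hU, hV, mul_mul_mul_comm, ← Polynomial.C_mul, inv_mul_cancel₀ hα0,
      Polynomial.C_1, one_mul, heq]
  have hU0 : U ≠ 0 := mul_ne_zero (by simpa using inv_ne_zero hα0) hu0
  have hV0 : V ≠ 0 := mul_ne_zero (by simpa using hα0) hv0
  have hUdeg : U.natDegree = u.natDegree := Polynomial.natDegree_C_mul (inv_ne_zero hα0)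
  have hVdeg : V.natDegree = v.natDegree := Polynomial.natDegree_C_mul hα0
  have hUmon : U.Monic := by
    unfold Polynomial.Monic
    rw [hU, Polynomial.leadingCoeff_mul, Polynomial.leadingCoeff_C, ← hα,
      inv_mul_cancel₀ hα0]
  have hVmon : V.Monic := hUmon.of_mul_monic_left (hUV ▸ hmon)
  set d := U.natDegree with hdd
  set e := V.natDegree with hee
  have hd1 : 1 ≤ d := by omega
  have he1 : 1 ≤ e := by omega
  have hde : d + e = n := by omega
  -- weighted minima
  set WU : ℕ → ℤ := fun i => (n : ℤ) * padicValRat l (U.coeff i) - l * i with hWU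
  set WV : ℕ → ℤ := fun j => (n : ℤ) * padicValRat l (V.coeff j) - l * j with hWV
  have hUsupp : U.support.Nonempty := Polynomial.nonempty_support_iff.mpr hU0
  have hVsupp : V.support.Nonempty := Polynomial.nonempty_support_iff.mpr hV0
  set mu := (U.support.image WU).min' (hUsupp.image WU) with hmu
  set mv := (V.support.image WV).min' (hVsupp.image WV) with hmv
  have hmu_ex : ∃ i, U.coeff i ≠ 0 ∧ WU i = mu := by
    obtain ⟨i, hi, hWi⟩ := Finset.mem_image.mp ((U.support.image WU).min'_mem (hUsupp.image WU))
    exact ⟨i, Polynomial.mem_support_iff.mp hi, hWi⟩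
  have hmu_le : ∀ i, U.coeff i ≠ 0 → mu ≤ WU i := fun i hi =>
    Finset.min'_le _ _ (Finset.mem_image_of_mem WU (Polynomial.mem_support_iff.mpr hi))
  have hmv_ex : ∃ j, V.coeff j ≠ 0 ∧ WV j = mv := by
    obtain ⟨j, hj, hWj⟩ := Finset.mem_image.mp ((V.support.image WV).min'_mem (hVsupp.image WV))
    exact ⟨j, Polynomial.mem_support_iff.mp hj, hWj⟩
  have hmv_le : ∀ j, V.coeff j ≠ 0 → mv ≤ WV j := fun j hj =>
    Finset.min'_le _ _ (Finset.mem_image_of_mem WV (Polynomial.mem_support_iff.mpr hj))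
  -- apply the key lemma
  obtain ⟨k, hk0, hkle⟩ := key_index (l := l) n (by omega) U V mu mv hmu_ex hmu_le hmv_ex hmv_le
  rw [hUV] at hk0 hkle
  have hkcases : k = 0 ∨ k = 1 ∨ k = n := by
    by_contra hcon
    push_neg at hcon
    exact hk0 (hother k hcon.1 hcon.2.1 hcon.2.2)
  -- lower bound on mu + mv
  have hWlow : -((n : ℤ) * l) ≤ mu + mv := by
    rcases hkcases with rfl | rfl | rfl
    · rw [hc0, padicValRat.neg, va] at hkle
      push_cast at hkle ⊢
      linarith
    · rw [hc1, padicValRat.neg, vb] at hkle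
      push_cast at hkle
      have hl0 : (0 : ℤ) ≤ l := by positivity
      have hn1' : (1 : ℤ) ≤ n := by exact_mod_cast (by omega : 1 ≤ n)
      nlinarith
    · rw [hcn] at hkle
      have : padicValRat l (1 : ℚ) = 0 := by simp
      rw [this] at hkle
      linarith
  -- constant coefficients
  have h00 : U.coeff 0 * V.coeff 0 = -a := by
    rw [← Polynomial.mul_coeff_zero, hUV, hc0]
  have hU00 : U.coeff 0 ≠ 0 := by
    intro h; rw [h, zero_mul] at h00; exact ha0 (by linarith [h00.symm] : a = 0)
  have hV00 : V.coeff 0 ≠ 0 := by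
    intro h; rw [h, mul_zero] at h00; exact ha0 (by linarith [h00.symm] : a = 0)
  set x := padicValRat l (U.coeff 0) with hx
  set y := padicValRat l (V.coeff 0) with hy
  have hxy : x + y = -(l : ℤ) := by
    rw [hx, hy, ← padicValRat.mul hU00 hV00, h00, padicValRat.neg, va]
  have hmux : mu ≤ (n : ℤ) * x := by
    have := hmu_le 0 hU00
    rw [hWU] at this
    simpa using this
  have hmvy : mv ≤ (n : ℤ) * y := by
    have := hmv_le 0 hV00
    rw [hWV] at this
    simpa using this
  have hUd : U.coeff d = 1 := hUmon.coeff_natDegree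
  have hVe : V.coeff e = 1 := hVmon.coeff_natDegree
  have hmud : mu ≤ -((l : ℤ) * d) := by
    have h1 := hmu_le d (by rw [hUd]; norm_num)
    rw [hWU] at h1
    simp only [hUd] at h1
    have : padicValRat l (1 : ℚ) = 0 := by simp
    rw [this] at h1
    linarith
  have hmve : mv ≤ -((l : ℤ) * e) := by
    have h1 := hmv_le e (by rw [hVe]; norm_num)
    rw [hWV] at h1
    simp only [hVe] at h1
    have : padicValRat l (1 : ℚ) = 0 := by simp
    rw [this] at h1
    linarith
  -- conclude n * x = -(l * d)
  have hcast : (d : ℤ) + e = n := by exact_mod_cast hde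
  have hnl : (n : ℤ) * l = l * d + l * e := by linear_combination (l : ℤ) * hcast.symm
  have h2 : -((l : ℤ) * d) ≤ (n : ℤ) * x := by linarith
  have h3 : -((l : ℤ) * e) ≤ (n : ℤ) * y := by linarith
  have h4 : (n : ℤ) * x + (n : ℤ) * y = -((l : ℤ) * d) - (l : ℤ) * e := by
    linear_combination (n : ℤ) * hxy - hnl
  have hnx : (n : ℤ) * x = -((l : ℤ) * d) := by linarith
  have hdvdZ : (n : ℤ) ∣ (l : ℤ) * d := ⟨-x, by linarith⟩
  have hdvdN : n ∣ l * d := by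
    have : ((n : ℕ) : ℤ) ∣ ((l * d : ℕ) : ℤ) := by push_cast; exact hdvdZ
    exact_mod_cast this
  have hcop : Nat.Coprime l n := (Nat.Prime.coprime_iff_not_dvd hl).mpr hln
  have hnd : n ∣ d := (Nat.Coprime.dvd_of_dvd_mul_left hcop.symm) hdvdN
  have : n ≤ d := Nat.le_of_dvd (by omega) hnd
  omega
end

section
/- Let (l, p, b, c) be a g-admissible quadruple for an integer g ≥ 2. Then the polynomial x^{2g} − b·x − (p·c)/l^l, viewed as a polynomial with coefficients in the field ℚ_l of l-adic numbers, is irreducible over ℚ_l. -/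
open Polynomial NNReal

variable {L : ℕ} [hL : Fact L.Prime]

lemma padic_nnnorm_add_le_max (a b : ℚ_[L]) : ‖a + b‖₊ ≤ max ‖a‖₊ ‖b‖₊ := by
  rw [← NNReal.coe_le_coe]
  simpa [NNReal.coe_max] using Padic.nonarchimedean a b

lemma padic_nnnorm_sum_lt {α : Type*} (s : Finset α) (F : α → ℚ_[L]) (M : ℝ≥0) (hM : 0 < M)
    (h : ∀ x ∈ s, ‖F x‖₊ < M) : ‖∑ x ∈ s, F x‖₊ < M := by
  classical
  induction s using Finset.induction_on with
  | empty => simpa using hM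
  | @insert a s' hx ih =>
    rw [Finset.sum_insert hx]
    refine lt_of_le_of_lt (padic_nnnorm_add_le_max _ _) ?_
    exact max_lt (h a (Finset.mem_insert_self a s'))
      (ih fun x hxs => h x (Finset.mem_insert_of_mem hxs))

noncomputable def gnorm (r : ℝ≥0) (P : ℚ_[L][X]) : ℝ≥0 :=
  P.support.sup fun i => ‖P.coeff i‖₊ * r ^ i

lemma term_le_gnorm (r : ℝ≥0) (P : ℚ_[L][X]) (i : ℕ) :
    ‖P.coeff i‖₊ * r ^ i ≤ gnorm r P := by
  by_cases h : P.coeff i = 0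
  · rw [h]
    simpa using zero_le (gnorm r P)
  · unfold gnorm
    exact Finset.le_sup (f := fun i => ‖P.coeff i‖₊ * r ^ i) (Polynomial.mem_support_iff.mpr h)

lemma gnorm_le (r : ℝ≥0) (P : ℚ_[L][X]) (B : ℝ≥0)
    (h : ∀ i, ‖P.coeff i‖₊ * r ^ i ≤ B) : gnorm r P ≤ B := by
  unfold gnorm
  exact Finset.sup_le fun i _ => h i

lemma gnorm_pos (r : ℝ≥0) (hr : 0 < r) {P : ℚ_[L][X]} (hP : P ≠ 0) : 0 < gnorm r P := by
  obtain ⟨i, hi⟩ := Polynomial.nonempty_support_iff.mpr hP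
  have hci : P.coeff i ≠ 0 := Polynomial.mem_support_iff.mp hi
  have h1 : (0:ℝ≥0) < ‖P.coeff i‖₊ * r ^ i :=
    mul_pos (nnnorm_pos.mpr hci) (pow_pos hr i)
  calc (0:ℝ≥0) < ‖P.coeff i‖₊ * r ^ i := h1
    _ ≤ gnorm r P := term_le_gnorm r P i

lemma exists_max_index (r : ℝ≥0) (hr : 0 < r) {P : ℚ_[L][X]} (hP : P ≠ 0) :
    ∃ i0, ‖P.coeff i0‖₊ * r ^ i0 = gnorm r P ∧
      ∀ i, i0 < i → ‖P.coeff i‖₊ * r ^ i < gnorm r P := by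
  classical
  set S : Finset ℕ := P.support.filter (fun i => ‖P.coeff i‖₊ * r ^ i = gnorm r P) with hS
  have hPs : P.support.Nonempty := Polynomial.nonempty_support_iff.mpr hP
  obtain ⟨i1, hi1mem, hi1⟩ := Finset.exists_mem_eq_sup P.support hPs
    (fun i => ‖P.coeff i‖₊ * r ^ i)
  have hSne : S.Nonempty := ⟨i1, Finset.mem_filter.mpr ⟨hi1mem, hi1.symm⟩⟩
  refine ⟨S.max' hSne, (Finset.mem_filter.mp (S.max'_mem hSne)).2, ?_⟩
  intro i hi
  have hle : ‖P.coeff i‖₊ * r ^ i ≤ gnorm r P := term_le_gnorm r P i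
  rcases lt_or_eq_of_le hle with h | h
  · exact h
  · exfalso
    have hci : P.coeff i ≠ 0 := by
      intro h0
      have := gnorm_pos r hr hP
      rw [h0] at h
      simp at h
      rw [← h] at this
      exact lt_irrefl _ this
    have : i ∈ S := Finset.mem_filter.mpr ⟨Polynomial.mem_support_iff.mpr hci, h⟩
    exact absurd (S.le_max' i this) (not_le.mpr hi)

lemma gnorm_mul_ge (r : ℝ≥0) (hr : 0 < r) (P Q : ℚ_[L][X]) (hP : P ≠ 0) (hQ : Q ≠ 0) :
    gnorm r P * gnorm r Q ≤ gnorm r (P * Q) := by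
  classical
  obtain ⟨i0, hi0, hiP⟩ := exists_max_index r hr hP
  obtain ⟨j0, hj0, hjQ⟩ := exists_max_index r hr hQ
  have hApos : 0 < gnorm r P := gnorm_pos r hr hP
  have hBpos : 0 < gnorm r Q := gnorm_pos r hr hQ
  set M : ℝ≥0 := ‖P.coeff i0 * Q.coeff j0‖₊ with hMdef
  have hMr : M * r ^ (i0 + j0) = gnorm r P * gnorm r Q := by
    rw [hMdef, nnnorm_mul, pow_add, ← hi0, ← hj0]
    ring
  have hMpos : 0 < M := by
    rcases eq_or_lt_of_le (zero_le : (0:ℝ≥0) ≤ M) with h | h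
    · exfalso
      rw [← h, zero_mul] at hMr
      exact absurd hMr.symm (ne_of_gt (mul_pos hApos hBpos))
    · exact h
  set T : Finset (ℕ × ℕ) := (Finset.HasAntidiagonal.antidiagonal (i0 + j0)).erase (i0, j0) with hT
  have hterm : ∀ x ∈ T, ‖P.coeff x.1 * Q.coeff x.2‖₊ < M := by
    intro x hx
    have hxs : x.1 + x.2 = i0 + j0 := Finset.HasAntidiagonal.mem_antidiagonal.mp (Finset.mem_of_mem_erase hx)
    have hxne : x ≠ (i0, j0) := Finset.ne_of_mem_erase hx
    have hcase : i0 < x.1 ∨ j0 < x.2 := by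
      by_contra hc
      push_neg at hc
      obtain ⟨h1, h2⟩ := hc
      have e1 : x.1 = i0 := by omega
      have e2 : x.2 = j0 := by omega
      exact hxne (Prod.ext e1 e2)
    have key : ‖P.coeff x.1 * Q.coeff x.2‖₊ * r ^ (i0 + j0)
        < M * r ^ (i0 + j0) := by
      rw [hMr, ← hxs, nnnorm_mul, pow_add]
      have hrw : ‖P.coeff x.1‖₊ * ‖Q.coeff x.2‖₊ * (r ^ x.1 * r ^ x.2)
          = (‖P.coeff x.1‖₊ * r ^ x.1) * (‖Q.coeff x.2‖₊ * r ^ x.2) := by ring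
      rw [hrw]
      rcases hcase with h | h
      · calc (‖P.coeff x.1‖₊ * r ^ x.1) * (‖Q.coeff x.2‖₊ * r ^ x.2)
            ≤ (‖P.coeff x.1‖₊ * r ^ x.1) * gnorm r Q :=
              mul_le_mul_right (term_le_gnorm r Q x.2) _
          _ < gnorm r P * gnorm r Q :=
              mul_lt_mul_of_pos_right (hiP x.1 h) hBpos
      · calc (‖P.coeff x.1‖₊ * r ^ x.1) * (‖Q.coeff x.2‖₊ * r ^ x.2)
            ≤ gnorm r P * (‖Q.coeff x.2‖₊ * r ^ x.2) :=
              mul_le_mul_left (term_le_gnorm r P x.1) _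
          _ < gnorm r P * gnorm r Q :=
              mul_lt_mul_of_pos_left (hjQ x.2 h) hApos
    exact lt_of_mul_lt_mul_right key zero_le
  have hsum : ‖∑ x ∈ T, P.coeff x.1 * Q.coeff x.2‖₊ < M :=
    padic_nnnorm_sum_lt T _ M hMpos hterm
  have hco : (P * Q).coeff (i0 + j0)
      = P.coeff i0 * Q.coeff j0 + ∑ x ∈ T, P.coeff x.1 * Q.coeff x.2 := by
    rw [Polynomial.coeff_mul]
    exact (Finset.add_sum_erase _ _ (by simp)).symm
  have hMc : M ≤ ‖(P * Q).coeff (i0 + j0)‖₊ := by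
    by_contra hlt'
    push_neg at hlt'
    have hdecomp : P.coeff i0 * Q.coeff j0
        = (P * Q).coeff (i0 + j0) + -(∑ x ∈ T, P.coeff x.1 * Q.coeff x.2) := by
      rw [hco]; ring
    have : M ≤ max ‖(P * Q).coeff (i0 + j0)‖₊ ‖-(∑ x ∈ T, P.coeff x.1 * Q.coeff x.2)‖₊ := by
      rw [hMdef, hdecomp]
      exact padic_nnnorm_add_le_max _ _
    rw [nnnorm_neg] at this
    exact absurd this (not_le.mpr (max_lt hlt' hsum))
  calc gnorm r P * gnorm r Q = M * r ^ (i0 + j0) := hMr.symm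
    _ ≤ ‖(P * Q).coeff (i0 + j0)‖₊ * r ^ (i0 + j0) := mul_le_mul_left hMc _
    _ ≤ gnorm r (P * Q) := term_le_gnorm r (P * Q) _

lemma padic_nnnorm_int_eq_one {z : ℤ} (hz : ¬ (L : ℤ) ∣ z) : ‖(z : ℚ_[L])‖₊ = 1 := by
  have h1 : ‖(z : ℚ_[L])‖ ≤ 1 := Padic.norm_int_le_one z
  have h2 : ¬ ‖(z : ℚ_[L])‖ < 1 := fun h => hz ((Padic.norm_intCast_lt_one_iff).mp h)
  have : ‖(z : ℚ_[L])‖ = 1 := le_antisymm h1 (not_lt.mp h2)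
  ext
  simpa using this


/-- For a `g`-admissible quadruple `(l, p, b, c)` (with `g ≥ 2`),
the polynomial `x^(2g) - b·x - (p·c)/l^l`, viewed over the field `ℚ_l` of
`l`-adic numbers, is irreducible over `ℚ_l`. -/
theorem mori_polynomial_irreducible_padic (g : ℕ) (hg : 2 ≤ g)
    (l p : ℕ) (hl : Fact l.Prime) (hp : p.Prime)
    (hldvd : l ∣ 2 * g - 1) (hpmod : p ≡ 1 [MOD 2 * g - 1])
    (b c : ℤ) (hbl : ¬ (l : ℤ) ∣ b)
    (hbord : orderOf ((b : ZMod p)) = p - 1)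
    (hcl : ¬ (l : ℤ) ∣ c) :
    Irreducible (Polynomial.X ^ (2 * g) - Polynomial.C (b : ℚ_[l]) * Polynomial.X
      - Polynomial.C (((p : ℚ_[l]) * (c : ℚ_[l])) / (l : ℚ_[l]) ^ l)) := by
  have hlprime := hl.out
  have hl2 : 2 ≤ l := hlprime.two_le
  set n : ℕ := 2 * g with hn
  have hn4 : 4 ≤ n := by omega
  set b' : ℚ_[l] := (b : ℚ_[l]) with hb'
  set u : ℚ_[l] := ((p : ℚ_[l]) * (c : ℚ_[l])) / (l : ℚ_[l]) ^ l with hu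
  set f : ℚ_[l][X] := X ^ n - C b' * X - C u with hf
  -- arithmetic facts
  have hlp : ¬ l ∣ p := by
    intro hdvd
    have h1 : p % l = 1 % l := Nat.ModEq.of_dvd hldvd hpmod
    obtain ⟨k, hk⟩ := hdvd
    subst hk
    rw [Nat.mul_mod_right, Nat.mod_eq_of_lt (by omega : 1 < l)] at h1
    omega
  have hln : ¬ l ∣ n := by
    intro hdvd
    have h1 : l ∣ (n - (2 * g - 1)) := Nat.dvd_sub hdvd hldvd
    have h2 : n - (2 * g - 1) = 1 := by omega
    rw [h2] at h1
    have := Nat.le_of_dvd one_pos h1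
    omega
  -- norm computations
  have hlne : ((l : ℝ≥0)) ≠ 0 := by
    simp only [ne_eq, Nat.cast_eq_zero]
    omega
  have hnl : ‖((l : ℕ) : ℚ_[l])‖₊ = (l : ℝ≥0)⁻¹ := by
    ext
    simpa using padicNormE.norm_p (p := l)
  have hnp : ‖((p : ℕ) : ℚ_[l])‖₊ = 1 := by
    have : ¬ (l : ℤ) ∣ (p : ℤ) := by
      rw [Int.natCast_dvd_natCast]
      exact hlp
    have h := padic_nnnorm_int_eq_one (L := l) this
    rwa [Int.cast_natCast] at h
  have hnc : ‖(c : ℚ_[l])‖₊ = 1 := padic_nnnorm_int_eq_one hcl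
  have hnb : ‖b'‖₊ ≤ 1 := by
    rw [← NNReal.coe_le_coe]
    simpa using Padic.norm_int_le_one (p := l) b
  have hnu : ‖u‖₊ = (l : ℝ≥0) ^ l := by
    rw [hu, nnnorm_div, nnnorm_mul, nnnorm_pow, hnp, hnc, hnl, one_mul, inv_pow, one_div,
      inv_inv]
  
  -- the radius
  set r : ℝ≥0 := (l : ℝ≥0) ^ ((l : ℝ) / (n : ℝ)) with hrdef
  have hlpos : (0 : ℝ≥0) < (l : ℝ≥0) := by
    rw [pos_iff_ne_zero]; exact hlne
  have hr0 : 0 < r := NNReal.rpow_pos hlpos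
  have hrn : r ^ n = (l : ℝ≥0) ^ l := by
    rw [hrdef, ← NNReal.rpow_natCast (((l : ℝ≥0)) ^ ((l : ℝ) / (n : ℝ))) n,
      ← NNReal.rpow_mul, div_mul_cancel₀, NNReal.rpow_natCast]
    exact_mod_cast (by omega : n ≠ 0)
  have hr1 : 1 ≤ r := NNReal.one_le_rpow (by exact_mod_cast hl2.trans' one_le_two) (by positivity)
  -- coefficients of f
  have hne0 : ¬ (0 = n) := by omega
  have hne1 : ¬ (1 = n) := by omega
  have hne1' : ¬ (n = 1) := by omega
  have hne0' : ¬ (n = 0) := by omega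
  have hc0 : f.coeff 0 = -u := by
    simp [hf, Polynomial.coeff_X_pow, hne0]
  have hc1 : f.coeff 1 = -b' := by
    simp [hf, Polynomial.coeff_X_pow, hne1]
  have hcn : f.coeff n = 1 := by
    simp [hf, Polynomial.coeff_X_pow, Polynomial.coeff_X, Polynomial.coeff_C, hne1, hne1', hne0, hne0']
  have hcoth : ∀ i, i ≠ 0 → i ≠ 1 → i ≠ n → f.coeff i = 0 := by
    intro i h0 h1 hn'
    have : ¬ (i = n) := hn'
    have h1' : ¬ (1 = i) := fun h => h1 h.symm
    have h0' : ¬ (i = 0) := h0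
    simp [hf, Polynomial.coeff_X_pow, Polynomial.coeff_X, Polynomial.coeff_C, h0', h1', this]
  
  -- degree of f
  have hdeg : f.degree = (n : ℕ) := by
    rw [hf, sub_sub]
    have h1 : (C b' * X + C u).degree < (X ^ n : ℚ_[l][X]).degree := by
      rw [Polynomial.degree_X_pow]
      refine lt_of_le_of_lt (Polynomial.degree_add_le _ _) (max_lt ?_ ?_)
      · refine lt_of_le_of_lt (Polynomial.degree_mul_le _ _) ?_
        refine lt_of_le_of_lt (add_le_add Polynomial.degree_C_le Polynomial.degree_X.le) ?_
        rw [zero_add]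
        exact_mod_cast (by exact_mod_cast (by omega : (1:ℕ) < n) : (1 : WithBot ℕ) < (n : ℕ))
      · exact lt_of_le_of_lt Polynomial.degree_C_le
          (by exact_mod_cast (by omega : (0:ℕ) < n) : (0 : WithBot ℕ) < (n : ℕ))
    rw [Polynomial.degree_sub_eq_left_of_degree_lt h1, Polynomial.degree_X_pow]
  have hfnd : f.natDegree = n := Polynomial.natDegree_eq_of_degree_eq_some hdeg
  have hf0 : f ≠ 0 := fun h => by
    rw [h, Polynomial.degree_zero] at hdeg
    exact absurd hdeg (by simp)
  have hfm : f.Monic := by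
    rw [Polynomial.Monic, Polynomial.leadingCoeff, hfnd, hcn]
  -- gnorm of f
  have hNf : gnorm r f ≤ r ^ n := by
    refine gnorm_le r f _ ?_
    intro i
    rcases eq_or_ne i 0 with rfl | h0
    · rw [hc0, nnnorm_neg, hnu, pow_zero, mul_one, hrn]
    rcases eq_or_ne i 1 with rfl | h1
    · rw [hc1, nnnorm_neg]
      calc ‖b'‖₊ * r ^ 1 ≤ 1 * r ^ 1 := mul_le_mul_left hnb _
        _ = r ^ 1 := one_mul _
        _ ≤ r ^ n := pow_le_pow_right₀ hr1 (by omega)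
    rcases eq_or_ne i n with rfl | h2
    · rw [hcn, nnnorm_one, one_mul]
    · rw [hcoth i h0 h1 h2]
      simp
  
  -- the factorization argument
  constructor
  · intro hunit
    rw [Polynomial.isUnit_iff_degree_eq_zero, hdeg] at hunit
    have : n = 0 := by exact_mod_cast hunit
    omega
  · intro a bb hab
    by_contra hcon
    push_neg at hcon
    obtain ⟨hua, hub⟩ := hcon
    have ha0 : a ≠ 0 := fun h => hf0 (by rw [hab, h, zero_mul])
    have hb0 : bb ≠ 0 := fun h => hf0 (by rw [hab, h, mul_zero])
    set G := a * C (a.leadingCoeff)⁻¹ with hG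
    set H := bb * C (bb.leadingCoeff)⁻¹ with hH
    have hGm : G.Monic := Polynomial.monic_mul_leadingCoeff_inv ha0
    have hHm : H.Monic := Polynomial.monic_mul_leadingCoeff_inv hb0
    have hlead : a.leadingCoeff * bb.leadingCoeff = 1 := by
      rw [← Polynomial.leadingCoeff_mul, ← hab]
      exact hfm
    have hinv : (a.leadingCoeff)⁻¹ * (bb.leadingCoeff)⁻¹ = 1 := by
      rw [← mul_inv, hlead, inv_one]
    have hGH : G * H = f := by
      rw [hG, hH]
      calc a * C (a.leadingCoeff)⁻¹ * (bb * C (bb.leadingCoeff)⁻¹)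
          = a * bb * C ((a.leadingCoeff)⁻¹ * (bb.leadingCoeff)⁻¹) := by
            rw [Polynomial.C_mul]; ring
        _ = f := by rw [hinv, Polynomial.C_1, mul_one, ← hab]
    have hG0 : G ≠ 0 := hGm.ne_zero
    have hH0 : H ≠ 0 := hHm.ne_zero
    set k := G.natDegree with hk
    set m := H.natDegree with hm
    have hkm : k + m = n := by
      rw [hk, hm, ← Polynomial.natDegree_mul hG0 hH0, hGH, hfnd]
    have hdkpos : ∀ q : ℚ_[l][X], q ≠ 0 → ¬ IsUnit q → 0 < q.natDegree := by
      intro q hq huq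
      rcases Nat.eq_zero_or_pos q.natDegree with h | h
      · exfalso
        apply huq
        rw [Polynomial.isUnit_iff_degree_eq_zero, Polynomial.degree_eq_natDegree hq, h]
        rfl
      · exact h
    have hlcna : (a.leadingCoeff)⁻¹ ≠ 0 :=
      inv_ne_zero (Polynomial.leadingCoeff_ne_zero.mpr ha0)
    have hlcnb : (bb.leadingCoeff)⁻¹ ≠ 0 :=
      inv_ne_zero (Polynomial.leadingCoeff_ne_zero.mpr hb0)
    have hka : k = a.natDegree := by
      rw [hk, hG, Polynomial.natDegree_mul ha0 (fun h => hlcna (Polynomial.C_eq_zero.mp h)),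
        Polynomial.natDegree_C, add_zero]
    have hmb : m = bb.natDegree := by
      rw [hm, hH, Polynomial.natDegree_mul hb0 (fun h => hlcnb (Polynomial.C_eq_zero.mp h)),
        Polynomial.natDegree_C, add_zero]
    have hk1 : 1 ≤ k := hka ▸ hdkpos a ha0 hua
    have hm1 : 1 ≤ m := hmb ▸ hdkpos bb hb0 hub
    -- Gauss norm bounds
    have hAk : r ^ k ≤ gnorm r G := by
      have h1 := term_le_gnorm r G k
      rw [hk] at h1
      rwa [hGm.coeff_natDegree, nnnorm_one, one_mul, ← hk] at h1
    have hBm : r ^ m ≤ gnorm r H := by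
      have h1 := term_le_gnorm r H m
      rw [hm] at h1
      rwa [hHm.coeff_natDegree, nnnorm_one, one_mul, ← hm] at h1
    have hprod : gnorm r G * gnorm r H ≤ r ^ n := by
      calc gnorm r G * gnorm r H ≤ gnorm r (G * H) := gnorm_mul_ge r hr0 G H hG0 hH0
        _ = gnorm r f := by rw [hGH]
        _ ≤ r ^ n := hNf
    have hGA : gnorm r G = r ^ k := by
      refine le_antisymm ?_ hAk
      have h1 : gnorm r G * r ^ m ≤ r ^ k * r ^ m := by
        calc gnorm r G * r ^ m ≤ gnorm r G * gnorm r H := mul_le_mul_right hBm _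
          _ ≤ r ^ n := hprod
          _ = r ^ k * r ^ m := by rw [← pow_add, hkm]
      exact le_of_mul_le_mul_right h1 (pow_pos hr0 m)
    have hHB : gnorm r H = r ^ m := by
      refine le_antisymm ?_ hBm
      have h1 : gnorm r H * r ^ k ≤ r ^ m * r ^ k := by
        calc gnorm r H * r ^ k ≤ gnorm r H * gnorm r G := mul_le_mul_right hAk _
          _ = gnorm r G * gnorm r H := mul_comm _ _
          _ ≤ r ^ n := hprod
          _ = r ^ m * r ^ k := by rw [← pow_add, add_comm, hkm]
      exact le_of_mul_le_mul_right h1 (pow_pos hr0 k)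
    -- constant coefficients
    have hcc : ‖G.coeff 0‖₊ * ‖H.coeff 0‖₊ = r ^ n := by
      rw [← nnnorm_mul, ← Polynomial.mul_coeff_zero, hGH, hc0, nnnorm_neg, hnu, ← hrn]
    have hg0le : ‖G.coeff 0‖₊ ≤ r ^ k := by
      have h1 := term_le_gnorm r G 0
      rwa [pow_zero, mul_one, hGA] at h1
    have hh0le : ‖H.coeff 0‖₊ ≤ r ^ m := by
      have h1 := term_le_gnorm r H 0
      rwa [pow_zero, mul_one, hHB] at h1
    have hg0 : ‖G.coeff 0‖₊ = r ^ k := by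
      refine le_antisymm hg0le ?_
      have h1 : r ^ k * r ^ m ≤ ‖G.coeff 0‖₊ * r ^ m := by
        calc r ^ k * r ^ m = r ^ n := by rw [← pow_add, hkm]
          _ = ‖G.coeff 0‖₊ * ‖H.coeff 0‖₊ := hcc.symm
          _ ≤ ‖G.coeff 0‖₊ * r ^ m := mul_le_mul_right hh0le _
      exact le_of_mul_le_mul_right h1 (pow_pos hr0 m)
    -- numeric contradiction
    have hg0ne : G.coeff 0 ≠ 0 := by
      intro h
      rw [h, nnnorm_zero] at hg0
      exact absurd hg0.symm (ne_of_gt (pow_pos hr0 k))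
    have hval : ‖G.coeff 0‖ = (l : ℝ) ^ (-(G.coeff 0).valuation) :=
      Padic.norm_eq_zpow_neg_valuation hg0ne
    set v : ℤ := (G.coeff 0).valuation with hv
    have h2 : ((r ^ k : ℝ≥0) : ℝ) = (l : ℝ) ^ ((l : ℝ) / (n : ℝ) * (k : ℕ)) := by
      rw [hrdef, ← NNReal.rpow_natCast ((l : ℝ≥0) ^ ((l:ℝ) / (n:ℝ))) k, ← NNReal.rpow_mul,
        NNReal.coe_rpow, NNReal.coe_natCast]
    have hreal : (l : ℝ) ^ ((l : ℝ) / (n : ℝ) * (k : ℕ)) = (l : ℝ) ^ ((-v : ℤ) : ℝ) := by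
      rw [← h2, Real.rpow_intCast]
      rw [← hval, ← hg0]
      rfl
    have hlpos' : (0 : ℝ) < (l : ℝ) := by positivity
    have hllt : (1 : ℝ) < (l : ℝ) := by exact_mod_cast (by omega : 1 < l)
    have hlogs := congrArg Real.log hreal
    rw [Real.log_rpow hlpos', Real.log_rpow hlpos'] at hlogs
    have hlog0 : Real.log (l : ℝ) ≠ 0 := ne_of_gt (Real.log_pos hllt)
    have hexp : (l : ℝ) / (n : ℝ) * (k : ℕ) = ((-v : ℤ) : ℝ) :=
      mul_right_cancel₀ hlog0 hlogs
    have hnne : (n : ℝ) ≠ 0 := by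
      exact_mod_cast (by omega : n ≠ 0)
    have hfin : (l : ℤ) * (k : ℤ) = -v * (n : ℤ) := by
      field_simp at hexp
      have : ((l * k : ℕ) : ℤ) = (n : ℤ) * -v := by exact_mod_cast hexp
      push_cast at this
      linarith
    have hdvdZ : (n : ℤ) ∣ (l : ℤ) * (k : ℤ) := ⟨-v, by rw [hfin]; ring⟩
    have hdvdn : n ∣ l * k := by
      have h3 : ((n : ℤ)) ∣ ((l * k : ℕ) : ℤ) := by
        push_cast
        exact hdvdZ
      exact_mod_cast h3
    have hcop : Nat.Coprime n l := ((Nat.Prime.coprime_iff_not_dvd hlprime).mpr hln).symm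
    have hnk : n ∣ k := hcop.dvd_of_dvd_mul_left hdvdn
    have := Nat.le_of_dvd (by omega) hnk
    omega
end

section
/- Let X be a finite set with n = |X| ≥ 3 elements and let G be a subgroup of the group of permutations of X such that G acts transitively on X. Suppose G contains a permutation σ that is a cycle whose support has exactly n − 1 elements. Then the action of G on X is 2-transitive (2-pretransitive): any ordered pair of distinct elements of X can be mapped to any other ordered pair of distinct elements by an element of G. -/
/-- Let `X` be a finite set with `n = |X| ≥ 3` elements and `G` a
transitive subgroup of the permutation group of `X`. If `G` contains a cycle
whose support has exactly `n - 1` elements, then the action of `G` on `X` is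
2-transitive. -/
theorem two_transitive_of_cycle_support_card_sub_one
    (X : Type) [Fintype X] [DecidableEq X] (hn : 3 ≤ Fintype.card X)
    (G : Subgroup (Equiv.Perm X))
    (htrans : ∀ x y : X, ∃ g ∈ G, g x = y)
    (σ : Equiv.Perm X) (hσG : σ ∈ G) (hcyc : σ.IsCycle)
    (hsupp : σ.support.card = Fintype.card X - 1) :
    ∀ x₁ x₂ y₁ y₂ : X, x₁ ≠ x₂ → y₁ ≠ y₂ →
      ∃ g ∈ G, g x₁ = y₁ ∧ g x₂ = y₂ := by
  -- σ has exactly one fixed point a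
  have hcompl : σ.supportᶜ.card = 1 := by
    have h := Finset.card_compl (σ.support)
    omega
  obtain ⟨a, ha⟩ := Finset.card_eq_one.mp hcompl
  have hfix : ∀ x : X, x ∉ σ.support ↔ x = a := by
    intro x
    constructor
    · intro hx
      have : x ∈ σ.supportᶜ := Finset.mem_compl.mpr hx
      rw [ha] at this; simpa using this
    · intro hx
      rw [hx]
      have : a ∈ σ.supportᶜ := by rw [ha]; simp
      exact Finset.mem_compl.mp this
  have hσa : σ a = a := by
    have : a ∉ σ.support := (hfix a).mpr rfl
    simpa [Equiv.Perm.mem_support] using this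
  -- stabilizer of a is transitive on X \ {a}
  have hstab : ∀ b c : X, b ≠ a → c ≠ a → ∃ g ∈ G, g a = a ∧ g b = c := by
    intro b c hb hc
    have hbs : σ b ≠ b := by
      have : b ∈ σ.support := by
        by_contra h; exact hb ((hfix b).mp h)
      simpa [Equiv.Perm.mem_support] using this
    have hcs : σ c ≠ c := by
      have : c ∈ σ.support := by
        by_contra h; exact hc ((hfix c).mp h)
      simpa [Equiv.Perm.mem_support] using this
    obtain ⟨i, hi⟩ := hcyc.sameCycle hbs hcs
    exact ⟨σ ^ i, G.zpow_mem hσG i,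
      Equiv.Perm.zpow_apply_eq_self_of_apply_eq_self hσa i, hi⟩
  intro x₁ x₂ y₁ y₂ hx hy
  obtain ⟨g, hg, hg1⟩ := htrans x₁ a
  obtain ⟨h, hh, hh1⟩ := htrans y₁ a
  have hgx2 : g x₂ ≠ a := fun habs => hx (g.injective (by rw [hg1, habs]))
  have hhy2 : h y₂ ≠ a := fun habs => hy (h.injective (by rw [hh1, habs]))
  obtain ⟨k, hk, hka, hkb⟩ := hstab (g x₂) (h y₂) hgx2 hhy2
  refine ⟨h⁻¹ * k * g, mul_mem (mul_mem (G.inv_mem hh) hk) hg, ?_, ?_⟩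
  · rw [Equiv.Perm.mul_apply, Equiv.Perm.mul_apply, hg1, hka, ← hh1,
      Equiv.Perm.inv_def, Equiv.symm_apply_apply]
  · rw [Equiv.Perm.mul_apply, Equiv.Perm.mul_apply, hkb,
      Equiv.Perm.inv_def, Equiv.symm_apply_apply]
end

section
/- Let E be a number field with [E : ℚ] > 2 such that every intermediate field of the extension E/ℚ equals ℚ or E. Then the only roots of unity in E are 1 and −1; that is, if ζ ∈ E satisfies ζ^n = 1 for some integer n ≥ 1, then ζ = 1 or ζ = −1. -/
/-- Let `E` be a number field with `[E : ℚ] > 2` having no proper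
subfields except `ℚ`. Then the only roots of unity in `E` are `1` and `-1`. -/
theorem roots_of_unity_of_no_proper_subfield
    (E : Type) [Field E] [NumberField E]
    (hdeg : 2 < Module.finrank ℚ E)
    (hsub : ∀ K : IntermediateField ℚ E, K = ⊥ ∨ K = ⊤)
    (ζ : E) (n : ℕ) (hn : 1 ≤ n) (hζ : ζ ^ n = 1) :
    ζ = 1 ∨ ζ = -1 := by
  classical
  rcases hsub (IntermediateField.adjoin ℚ {ζ}) with hbot | htop
  · -- ζ is rational, hence ±1
    have hmem : ζ ∈ IntermediateField.adjoin ℚ {ζ} := IntermediateField.subset_adjoin ℚ {ζ} rfl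
    rw [hbot, IntermediateField.mem_bot] at hmem
    obtain ⟨q, rfl⟩ := hmem
    have hq : q ^ n = 1 := by
      have : (algebraMap ℚ E) (q ^ n) = algebraMap ℚ E 1 := by
        rw [map_pow, map_one, hζ]
      exact (algebraMap ℚ E).injective this
    rcases (pow_eq_one_iff_of_ne_zero (by omega)).1 hq with h1 | ⟨h1, -⟩
    · left; rw [h1, map_one]
    · right; rw [h1, map_neg, map_one]
  · -- E = ℚ(ζ), a cyclotomic field of degree > 2: contradiction
    exfalso
    have hfin : IsOfFinOrder ζ := isOfFinOrder_iff_pow_eq_one.2 ⟨n, by omega, hζ⟩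
    set d : ℕ := orderOf ζ with hd
    have hdpos : 0 < d := hfin.orderOf_pos
    set m : ℕ+ := ⟨d, hdpos⟩ with hm
    have hprim : IsPrimitiveRoot ζ (m : ℕ) := IsPrimitiveRoot.orderOf ζ
    have hcyc : IsCyclotomicExtension {(m : ℕ)} ℚ (Algebra.adjoin ℚ ({ζ} : Set E)) :=
      hprim.adjoin_isCyclotomicExtension ℚ
    have hint : IsIntegral ℚ ζ := IsIntegral.of_finite ℚ ζ
    have hadj : Algebra.adjoin ℚ ({ζ} : Set E) = ⊤ := by
      have := IntermediateField.adjoin_simple_toSubalgebra_of_isAlgebraic hint.isAlgebraic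
      rw [← this, htop]
      rfl
    have hE : IsCyclotomicExtension {(m : ℕ)} ℚ E :=
      IsCyclotomicExtension.equiv {(m : ℕ)} ℚ _
        ((Subalgebra.equivOfEq _ _ hadj).trans Subalgebra.topEquiv)
    haveI := hE
    haveI : IsGalois ℚ E := IsCyclotomicExtension.isGalois {(m : ℕ)} ℚ E
    have hirr : Irreducible (Polynomial.cyclotomic (m : ℕ) ℚ) :=
      Polynomial.cyclotomic.irreducible_rat m.pos
    have hrank : Module.finrank ℚ E = (m : ℕ).totient :=
      IsCyclotomicExtension.finrank E hirr
    have htot : 2 < (m : ℕ).totient := hrank ▸ hdeg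
    have hd2 : 2 < (m : ℕ) := lt_of_lt_of_le htot (Nat.totient_le _)
    have heven : Even ((m : ℕ).totient) := Nat.totient_even hd2
    have hcard : Fintype.card (E ≃ₐ[ℚ] E) = Module.finrank ℚ E :=
      Nat.card_eq_fintype_card (α := E ≃ₐ[ℚ] E) ▸ IsGalois.card_aut_eq_finrank ℚ E
    have hdvd : 2 ∣ Fintype.card (E ≃ₐ[ℚ] E) := by
      rw [hcard, hrank]; exact heven.two_dvd
    haveI : Fact (Nat.Prime 2) := ⟨Nat.prime_two⟩
    obtain ⟨g, hg⟩ := exists_prime_orderOf_dvd_card 2 hdvd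
    set H : Subgroup (E ≃ₐ[ℚ] E) := Subgroup.zpowers g with hH
    have hcardH : Fintype.card H = 2 := by
      rw [← Nat.card_eq_fintype_card, hH, Nat.card_zpowers, hg]
    have hfix : Module.finrank (IntermediateField.fixedField H) E = 2 := by
      rw [IntermediateField.finrank_fixedField_eq_card, Nat.card_eq_fintype_card, hcardH]
    rcases hsub (IntermediateField.fixedField H) with hb | ht
    · have hmul : Module.finrank ℚ (IntermediateField.fixedField H) *
          Module.finrank (IntermediateField.fixedField H) E = Module.finrank ℚ E :=
        Module.finrank_mul_finrank ℚ _ E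
      rw [hfix, hb, IntermediateField.finrank_bot] at hmul
      omega
    · rw [ht, IntermediateField.finrank_top] at hfix
      omega
end

section
/- Let E be a purely imaginary number field of degree 2s over ℚ (s ≥ 1), i.e., E admits no ring homomorphism into ℝ, and suppose the only roots of unity in E are 1 and −1. Let O be an order of E, i.e., a subring of E that is finitely generated as a ℤ-module and spans E as a ℚ-vector space. Then the group of units O^× of O is isomorphic, as an abstract group, to (ℤ/2ℤ) × ℤ^{s−1}. -/
open Module

/-- Torsion characterization for `Additive G`. -/
lemma aux_mem_torsion_iff {G : Type*} [CommGroup G] (x : Additive G) :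
    x ∈ Submodule.torsion ℤ (Additive G) ↔ ∃ n : ℕ, 0 < n ∧ Additive.toMul x ^ n = 1 := by
  rw [Submodule.mem_torsion_iff]
  constructor
  · rintro ⟨a, ha⟩
    have ha0 : (a : ℤ) ≠ 0 := nonZeroDivisors.coe_ne_zero a
    refine ⟨(a : ℤ).natAbs, Int.natAbs_pos.mpr ha0, ?_⟩
    have ha' : (a : ℤ) • x = 0 := ha
    have h1 : Additive.toMul ((a : ℤ) • x) = (1 : G) := by rw [ha']; rfl
    rw [toMul_zsmul] at h1
    rcases Int.natAbs_eq (a : ℤ) with h | h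
    · rw [h, zpow_natCast] at h1; exact h1
    · rw [h, zpow_neg, inv_eq_one, zpow_natCast] at h1; exact h1
  · rintro ⟨n, hn, h⟩
    refine ⟨⟨(n : ℤ), mem_nonZeroDivisors_of_ne_zero (by exact_mod_cast hn.ne')⟩, ?_⟩
    show ((n : ℤ) : ℤ) • x = 0
    have : Additive.toMul (((n : ℤ)) • x) = (1 : G) := by
      rw [toMul_zsmul, zpow_natCast]; exact h
    exact this

/-- A submodule with projective quotient splits off. -/
lemma aux_split {R M : Type*} [CommRing R] [AddCommGroup M] [Module R M]
    (N : Submodule R M) [Module.Projective R (M ⧸ N)] :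
    Nonempty (M ≃ₗ[R] N × (M ⧸ N)) := by
  obtain ⟨h, hh⟩ := Module.projective_lifting_property N.mkQ (LinearMap.id)
    (Submodule.mkQ_surjective N)
  have hh' : ∀ y : M ⧸ N, N.mkQ (h y) = y := fun y => LinearMap.congr_fun hh y
  refine ⟨{ toFun := fun x => (⟨x - h (N.mkQ x), ?_⟩, N.mkQ x),
            invFun := fun p => (p.1 : M) + h p.2,
            map_add' := ?_, map_smul' := ?_, left_inv := ?_, right_inv := ?_ }⟩
  · have : N.mkQ (x - h (N.mkQ x)) = 0 := by
      rw [map_sub, hh', sub_self]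
    exact (Submodule.Quotient.mk_eq_zero N).mp this
  · intro x y
    ext
    · show (x + y) - h (N.mkQ (x + y)) = (x - h (N.mkQ x)) + (y - h (N.mkQ y))
      rw [map_add, map_add]; abel
    · show N.mkQ (x + y) = N.mkQ x + N.mkQ y
      rw [map_add]
  · intro r x
    ext
    · show (r • x) - h (N.mkQ (r • x)) = r • (x - h (N.mkQ x))
      rw [map_smul, map_smul, smul_sub]
    · show N.mkQ (r • x) = r • N.mkQ x
      rw [map_smul]
  · intro x
    show (x - h (N.mkQ x)) + h (N.mkQ x) = x
    abel
  · rintro ⟨⟨n, hn⟩, y⟩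
    have h1 : N.mkQ (n + h y) = y := by
      rw [map_add, hh', Submodule.mkQ_apply, (Submodule.Quotient.mk_eq_zero N).mpr hn, zero_add]
    ext
    · show (n + h y) - h (N.mkQ (n + h y)) = n
      rw [h1]; abel
    · show N.mkQ (n + h y) = y
      exact h1

/-- Any 2-element additive group is `ZMod 2`. -/
lemma aux_zmod2 {A : Type*} [AddCommGroup A] (t : A) (ht2 : t + t = 0) (ht0 : t ≠ 0)
    (hall : ∀ a : A, a = 0 ∨ a = t) : Nonempty (A ≃+ ZMod 2) := by
  have hcond : zmultiplesHom A t (2 : ℤ) = 0 := by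
    simpa [zmultiplesHom, two_zsmul] using ht2
  let f : ZMod 2 →+ A := ZMod.lift 2 ⟨zmultiplesHom A t, hcond⟩
  have hf1 : f 1 = t := by
    have : f ((1 : ℤ) : ZMod 2) = (1 : ℤ) • t := ZMod.lift_coe 2 _ 1
    simpa using this
  have hf0 : f 0 = 0 := map_zero f
  have hbij : Function.Bijective f := by
    constructor
    · intro a b hab
      have hcases : ∀ c : ZMod 2, c = 0 ∨ c = 1 := by decide
      have hft : f 1 ≠ f 0 := by rw [hf0, hf1]; exact ht0
      rcases hcases a with ha | ha <;> rcases hcases b with hb | hb <;>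
        subst ha <;> subst hb
      · rfl
      · exact absurd hab.symm hft
      · exact absurd hab hft
      · rfl
    · intro a
      rcases hall a with ha | ha
      · exact ⟨0, by rw [hf0, ha]⟩
      · exact ⟨1, by rw [hf1, ha]⟩
  exact ⟨(AddEquiv.ofBijective f hbij).symm⟩

set_option maxHeartbeats 1600000 in
set_option synthInstance.maxHeartbeats 400000 in
set_option maxSynthPendingDepth 2 in
/-- Let `E` be a purely imaginary number field of degree `2s`
(`s ≥ 1`) whose only roots of unity are `1` and `-1`, and let `O` be an order
of `E`. Then the unit group `Oˣ` is isomorphic to `(ℤ/2ℤ) × ℤ^(s-1)`. -/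
theorem units_of_order_in_purely_imaginary_field
    (E : Type) [Field E] [NumberField E] (s : ℕ) (hs : 1 ≤ s)
    (hdeg : Module.finrank ℚ E = 2 * s)
    (him : IsEmpty (E →+* ℝ))
    (hroots : ∀ ζ : E, (∃ n : ℕ, 0 < n ∧ ζ ^ n = 1) → ζ = 1 ∨ ζ = -1)
    (O : Subring E) [Module.Finite ℤ O]
    (hspan : Submodule.span ℚ (O : Set E) = ⊤) :
    Nonempty (Oˣ ≃* Multiplicative (ZMod 2 × (Fin (s - 1) → ℤ))) := by
  classical
  -- the ℤ-linear inclusion of O into E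
  let j : O →ₗ[ℤ] E := (O.subtype.toAddMonoidHom).toIntLinearMap
  -- O, as a ℤ-submodule of E
  let OS : Submodule ℤ E := Subalgebra.toSubmodule (subalgebraOfSubring O)
  have hOS_mem : ∀ x : E, x ∈ OS ↔ x ∈ O := fun x => Iff.rfl
  have hOS_eq : OS = Submodule.map j ⊤ := by
    ext x
    simp only [Submodule.mem_map, Submodule.mem_top, true_and]
    constructor
    · intro hx; exact ⟨⟨x, hx⟩, rfl⟩
    · rintro ⟨y, rfl⟩; exact y.2
  have hOS_fg : OS.FG := by
    rw [hOS_eq]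
    exact Submodule.FG.map j (Module.finite_def.mp inferInstance)
  have hint : ∀ x ∈ O, IsIntegral ℤ x := fun x hx =>
    IsIntegral.of_mem_of_fg (subalgebraOfSubring O) hOS_fg x hx
  -- the inclusion of O into the ring of integers
  let ι : O →+* NumberField.RingOfIntegers E :=
  { toFun := fun x => ⟨(x : E), hint _ x.2⟩
    map_one' := by ext; rfl
    map_mul' := fun x y => by ext; rfl
    map_zero' := by ext; rfl
    map_add' := fun x y => by ext; rfl }
  have hι_coe : ∀ x : O, ((ι x : NumberField.RingOfIntegers E) : E) = (x : E) := fun x => rfl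
  have hι_inj : Function.Injective ι := by
    intro a b hab
    have : ((ι a : NumberField.RingOfIntegers E) : E) = ((ι b : NumberField.RingOfIntegers E) : E) := by rw [hab]
    exact Subtype.ext (by rwa [hι_coe, hι_coe] at this)
  -- denominator clearing
  have hden : ∀ x : E, ∃ n : ℤ, n ≠ 0 ∧ n • x ∈ O := by
    intro x
    have hx : x ∈ Submodule.span ℚ (O : Set E) := by rw [hspan]; trivial
    induction hx using Submodule.span_induction with
    | mem x h => exact ⟨1, one_ne_zero, by simpa using h⟩
    | zero => exact ⟨1, one_ne_zero, by simpa using zero_mem O⟩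
    | add x y hx hy ihx ihy =>
      obtain ⟨n, hn, hnx⟩ := ihx
      obtain ⟨m, hm, hmy⟩ := ihy
      refine ⟨n * m, mul_ne_zero hn hm, ?_⟩
      rw [smul_add]
      exact add_mem (by rw [mul_comm, mul_smul]; exact zsmul_mem hnx _)
        (by rw [mul_smul]; exact zsmul_mem hmy _)
    | smul q x hx ih =>
      obtain ⟨n, hn, hnx⟩ := ih
      refine ⟨n * q.den, mul_ne_zero hn (by exact_mod_cast q.den_nz), ?_⟩
      have hpr : ((n * (q.den : ℤ)) : ℤ) • (q • x) = q.num • (n • x) := by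
        rw [← Int.cast_smul_eq_zsmul ℚ (n * (q.den : ℤ)) (q • x), smul_smul]
        rw [← Int.cast_smul_eq_zsmul ℚ q.num (n • x), ← Int.cast_smul_eq_zsmul ℚ n x, smul_smul]
        congr 1
        push_cast
        have hq : (q.den : ℚ) * q = (q.num : ℚ) := by
          rw [mul_comm]
          nth_rewrite 1 [← Rat.num_div_den q]
          rw [div_mul_cancel₀]
          exact_mod_cast q.den_nz
        rw [mul_assoc, hq]
        ring
      rw [hpr]
      exact zsmul_mem hnx _
  -- a common denominator for the ring of integers
  obtain ⟨nn, snn, hsnn⟩ := Module.Finite.exists_fin (R := ℤ) (M := NumberField.RingOfIntegers E)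
  choose dd hdd hddO using fun i : Fin nn => hden ((snn i : E))
  let m : ℤ := ∏ i, dd i
  have hm : m ≠ 0 := Finset.prod_ne_zero_iff.mpr fun i _ => hdd i
  have hkey : ∀ y : NumberField.RingOfIntegers E, m • (y : E) ∈ O := by
    have hP : ∀ y : NumberField.RingOfIntegers E, (y : E) ∈
        OS.comap (LinearMap.lsmul ℤ E m) := by
      intro y
      have : Submodule.map ((algebraMap (NumberField.RingOfIntegers E) E).toAddMonoidHom.toIntLinearMap) ⊤ ≤
          OS.comap (LinearMap.lsmul ℤ E m) := by
        rw [← hsnn, Submodule.map_span, Submodule.span_le]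
        rintro _ ⟨_, ⟨i, rfl⟩, rfl⟩
        show m • ((snn i : E)) ∈ OS
        rw [hOS_mem]
        have : m = dd i * ∏ x ∈ Finset.univ.erase i, dd x := by
          show (∏ i, dd i) = _
          rw [← Finset.mul_prod_erase Finset.univ dd (Finset.mem_univ i)]
        rw [this, mul_comm, mul_smul]
        exact zsmul_mem (hddO i) _
      exact this ⟨y, trivial, rfl⟩
    intro y
    exact (hOS_mem _).mp (hP y)
  -- the induced map on unit groups, and its range H
  let φ : Oˣ →* (NumberField.RingOfIntegers E)ˣ := Units.map ι.toMonoidHom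
  have hφ_inj : Function.Injective φ := Units.map_injective hι_inj
  let H : Subgroup (NumberField.RingOfIntegers E)ˣ := φ.range
  -- H has finite index
  let mI : NumberField.RingOfIntegers E := (m : NumberField.RingOfIntegers E)
  have hmI : mI ≠ 0 := Int.cast_ne_zero.mpr hm
  have hmIE : ((mI : NumberField.RingOfIntegers E) : E) = (m : E) := by
    simp [mI, NumberField.RingOfIntegers.coe_eq_algebraMap, map_intCast]
  let I : Ideal (NumberField.RingOfIntegers E) := Ideal.span {mI}
  have hIbot : I ≠ ⊥ := by simpa [I, Ideal.span_singleton_eq_bot] using hmI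
  haveI : Finite (NumberField.RingOfIntegers E ⧸ I) := Ideal.finiteQuotientOfFreeOfNeBot I hIbot
  let Φ : (NumberField.RingOfIntegers E)ˣ →* (NumberField.RingOfIntegers E ⧸ I)ˣ :=
    Units.map (Ideal.Quotient.mk I).toMonoidHom
  haveI : Φ.ker.FiniteIndex := Subgroup.finiteIndex_ker Φ
  have hmemO : ∀ u : (NumberField.RingOfIntegers E)ˣ, u ∈ Φ.ker →
      (((u : NumberField.RingOfIntegers E)) : E) ∈ O := by
    intro u hu
    have h1 : Ideal.Quotient.mk I (u : NumberField.RingOfIntegers E) = 1 := by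
      have : (Φ u : NumberField.RingOfIntegers E ⧸ I) = 1 := by
        rw [hu]; rfl
      simpa [Φ] using this
    have h2 : ((u : NumberField.RingOfIntegers E) - 1) ∈ I := by
      rw [← Ideal.Quotient.eq_zero_iff_mem, RingHom.map_sub, RingHom.map_one, h1, sub_self]
    obtain ⟨c, hc⟩ := Ideal.mem_span_singleton'.mp h2
    have hcE : ((u : NumberField.RingOfIntegers E) : E) = 1 + m • (c : E) := by
      have : (u : NumberField.RingOfIntegers E) = 1 + mI * c := by
        have h3 : ((u : NumberField.RingOfIntegers E)) = mI * c + 1 := sub_eq_iff_eq_add.mp (by rw [← hc]; ring)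
        rw [h3, mul_comm]; ring
      calc ((u : NumberField.RingOfIntegers E) : E) = ((1 + mI * c : NumberField.RingOfIntegers E) : E) := by rw [this]
        _ = 1 + (m : E) * (c : E) := by push_cast [hmIE]; ring
        _ = 1 + m • (c : E) := by rw [zsmul_eq_mul]
    rw [hcE]
    exact add_mem (one_mem O) (hkey c)
  have hkerH : Φ.ker ≤ H := by
    intro u hu
    have huinv : u⁻¹ ∈ Φ.ker := inv_mem hu
    have h1 : ((u : NumberField.RingOfIntegers E) : E) ∈ O := hmemO u hu
    have h2 : (((u⁻¹ : (NumberField.RingOfIntegers E)ˣ) : NumberField.RingOfIntegers E) : E) ∈ O :=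
      hmemO u⁻¹ huinv
    have hmul : ((u : NumberField.RingOfIntegers E) : E) *
        (((u⁻¹ : (NumberField.RingOfIntegers E)ˣ) : NumberField.RingOfIntegers E) : E) = 1 := by
      have : ((u : NumberField.RingOfIntegers E) *
          ((u⁻¹ : (NumberField.RingOfIntegers E)ˣ) : NumberField.RingOfIntegers E)) = 1 := by
        exact_mod_cast u.mul_inv
      calc ((u : NumberField.RingOfIntegers E) : E) *
          (((u⁻¹ : (NumberField.RingOfIntegers E)ˣ) : NumberField.RingOfIntegers E) : E)
          = (((u : NumberField.RingOfIntegers E) *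
            ((u⁻¹ : (NumberField.RingOfIntegers E)ˣ) : NumberField.RingOfIntegers E) :
              NumberField.RingOfIntegers E) : E) := by push_cast; ring
        _ = 1 := by rw [this]; exact map_one _
    let v : Oˣ :=
    { val := ⟨((u : NumberField.RingOfIntegers E) : E), h1⟩
      inv := ⟨(((u⁻¹ : (NumberField.RingOfIntegers E)ˣ) : NumberField.RingOfIntegers E) : E), h2⟩
      val_inv := Subtype.ext (by simpa using hmul)
      inv_val := Subtype.ext (by simpa [mul_comm] using hmul) }
    refine ⟨v, ?_⟩
    apply Units.ext
    apply NumberField.RingOfIntegers.ext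
    rfl
  haveI hHfi : H.FiniteIndex := Subgroup.finiteIndex_of_le hkerH
  have hk0 : H.index ≠ 0 := hHfi.index_ne_zero
  have hpow : ∀ g : (NumberField.RingOfIntegers E)ˣ, g ^ H.index ∈ H :=
    fun g => H.pow_index_mem g
  -- module-theoretic setup
  let MO := Additive Oˣ
  let MG := Additive (NumberField.RingOfIntegers E)ˣ
  let ℓ : MO →ₗ[ℤ] MG := (MonoidHom.toAdditive φ).toIntLinearMap
  have hℓ_inj : Function.Injective ℓ := hφ_inj
  haveI : Module.Finite ℤ MG := inferInstance
  haveI : IsNoetherian ℤ MG := inferInstance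
  haveI : Module.Finite ℤ MO := by
    haveI : Module.Finite ℤ (LinearMap.range ℓ) :=
      Module.Finite.iff_fg.mpr (IsNoetherian.noetherian _)
    exact Module.Finite.equiv (LinearEquiv.ofInjective ℓ hℓ_inj).symm
  let NO := Submodule.torsion ℤ MO
  let NG := Submodule.torsion ℤ MG
  have hmap_tor : NO ≤ NG.comap ℓ := by
    rintro x ⟨a, ha⟩
    have ha' : (a : ℤ) • x = 0 := ha
    exact ⟨a, show (a : ℤ) • ℓ x = 0 by rw [← map_smul, ha', map_zero]⟩
  let QO := MO ⧸ NO
  let QG := MG ⧸ NG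
  let L : QO →ₗ[ℤ] QG := Submodule.mapQ NO NG ℓ hmap_tor
  have hL_inj : Function.Injective L := by
    rw [← LinearMap.ker_eq_bot, Submodule.eq_bot_iff]
    intro x hx
    obtain ⟨y, rfl⟩ := Submodule.Quotient.mk_surjective NO x
    have h1 : (Submodule.Quotient.mk (ℓ y) : QG) = 0 := by
      rw [← Submodule.mapQ_apply NO NG ℓ y]; exact hx
    have h2 : ℓ y ∈ NG := (Submodule.Quotient.mk_eq_zero NG).mp h1
    have h3 : y ∈ NO := by
      obtain ⟨a, ha⟩ := h2
      have ha' : (a : ℤ) • ℓ y = 0 := ha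
      refine ⟨a, show (a : ℤ) • y = 0 from hℓ_inj ?_⟩
      rw [map_smul, map_zero]; exact ha'
    exact (Submodule.Quotient.mk_eq_zero NO).mpr h3
  -- the rank of QG is the unit rank of E
  let ψ0 := QuotientGroup.mk' (NumberField.Units.torsion E)
  let ψ : MG →ₗ[ℤ] Additive ((NumberField.RingOfIntegers E)ˣ ⧸ NumberField.Units.torsion E) :=
    (MonoidHom.toAdditive ψ0).toIntLinearMap
  have hψ_surj : Function.Surjective ψ := by
    intro y
    obtain ⟨g, hg⟩ := QuotientGroup.mk'_surjective (NumberField.Units.torsion E) (Additive.toMul y)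
    exact ⟨Additive.ofMul g, congrArg Additive.ofMul hg⟩
  have hψ_ker : LinearMap.ker ψ = NG := by
    ext x
    simp only [LinearMap.mem_ker]
    constructor
    · intro hx
      have hx' : ψ0 (Additive.toMul x) = 1 := hx
      have hmem : Additive.toMul x ∈ NumberField.Units.torsion E :=
        (QuotientGroup.eq_one_iff _).mp hx'
      have hfin : IsOfFinOrder (Additive.toMul x) := hmem
      rw [isOfFinOrder_iff_pow_eq_one] at hfin
      obtain ⟨n, hn, h⟩ := hfin
      exact (aux_mem_torsion_iff x).mpr ⟨n, hn, h⟩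
    · intro hx
      obtain ⟨n, hn, h⟩ := (aux_mem_torsion_iff x).mp hx
      have hmem : Additive.toMul x ∈ NumberField.Units.torsion E := by
        show IsOfFinOrder _
        rw [isOfFinOrder_iff_pow_eq_one]
        exact ⟨n, hn, h⟩
      exact (QuotientGroup.eq_one_iff _).mpr hmem
  have hrankQG : finrank ℤ QG = NumberField.Units.rank E := by
    have e2 : QG ≃ₗ[ℤ] Additive ((NumberField.RingOfIntegers E)ˣ ⧸ NumberField.Units.torsion E) :=
      (Submodule.quotEquivOfEq NG (LinearMap.ker ψ) hψ_ker.symm).trans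
        (ψ.quotKerEquivOfSurjective hψ_surj)
    rw [e2.finrank_eq, NumberField.Units.rank_modTorsion]
  have hrankE : NumberField.Units.rank E = s - 1 := by
    have h0 : NumberField.InfinitePlace.nrRealPlaces E = 0 := by
      rw [Fintype.card_eq_zero_iff]
      exact ⟨fun w => him.elim (NumberField.InfinitePlace.embedding_of_isReal w.2)⟩
    have h2 := NumberField.InfinitePlace.card_add_two_mul_card_eq_rank E
    rw [h0, hdeg] at h2
    have h3 := NumberField.InfinitePlace.card_eq_nrRealPlaces_add_nrComplexPlaces E
    rw [NumberField.Units.rank, h3, h0]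
    omega
  -- the rank of QO is also s - 1
  haveI : Module.Finite ℤ QG := inferInstance
  haveI : Module.Finite ℤ QO := inferInstance
  haveI : IsNoetherian ℤ QG := inferInstance
  have hup : finrank ℤ QO ≤ finrank ℤ QG :=
    LinearMap.finrank_le_finrank_of_injective (f := L) hL_inj
  let σ : QG →ₗ[ℤ] QG := (H.index : ℤ) • LinearMap.id
  have hσ_inj : Function.Injective σ := by
    have hne : ((H.index : ℤ)) ≠ 0 := by exact_mod_cast hk0
    intro x y hxy
    have hxy' : (H.index : ℤ) • x = (H.index : ℤ) • y := hxy
    exact smul_right_injective QG hne hxy'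
  have hσ_le : LinearMap.range σ ≤ LinearMap.range L := by
    rintro _ ⟨y, rfl⟩
    obtain ⟨g, rfl⟩ := Submodule.Quotient.mk_surjective NG y
    obtain ⟨v, hv⟩ := hpow (Additive.toMul g)
    refine ⟨Submodule.Quotient.mk (Additive.ofMul v), ?_⟩
    have h1 : ℓ (Additive.ofMul v) = (H.index : ℤ) • g := by
      calc ℓ (Additive.ofMul v) = Additive.ofMul (φ v) := rfl
        _ = Additive.ofMul (Additive.toMul g ^ H.index) := by rw [hv]
        _ = H.index • g := by rw [ofMul_pow]; simp
        _ = (H.index : ℤ) • g := (natCast_zsmul g H.index).symm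
    calc L (Submodule.Quotient.mk (Additive.ofMul v))
        = Submodule.Quotient.mk (ℓ (Additive.ofMul v)) := Submodule.mapQ_apply NO NG ℓ _
      _ = Submodule.Quotient.mk ((H.index : ℤ) • g) := by rw [h1]
      _ = (H.index : ℤ) • (Submodule.Quotient.mk g : QG) := (Submodule.Quotient.mk_smul NG _ _)
      _ = σ (Submodule.Quotient.mk g) := rfl
  have hlow : finrank ℤ QG ≤ finrank ℤ QO := by
    haveI : Module.Finite ℤ (LinearMap.range L) :=
      Module.Finite.iff_fg.mpr (IsNoetherian.noetherian _)
    calc finrank ℤ QG = finrank ℤ (LinearMap.range σ) :=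
          (LinearEquiv.ofInjective σ hσ_inj).finrank_eq
      _ ≤ finrank ℤ (LinearMap.range L) :=
          LinearMap.finrank_le_finrank_of_injective (f := Submodule.inclusion hσ_le)
            (Submodule.inclusion_injective hσ_le)
      _ = finrank ℤ QO := ((LinearEquiv.ofInjective L hL_inj).finrank_eq).symm
  have hrankQO : finrank ℤ QO = s - 1 := by
    have := hup
    have := hlow
    omega
  -- torsion of Oˣ is {1, -1}
  have hne : (-1 : Oˣ) ≠ 1 := by
    intro h
    have h2 : ((((-1 : Oˣ) : O)) : E) = (((1 : Oˣ) : O) : E) := by rw [h]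
    have h3 : (-1 : E) = 1 := by simpa using h2
    norm_num at h3
  have htor_char : ∀ u : Oˣ, (∃ n : ℕ, 0 < n ∧ u ^ n = 1) → u = 1 ∨ u = -1 := by
    rintro u ⟨n, hn, h⟩
    have hE : (((u : O) : E)) ^ n = 1 := by
      have h1 : ((u ^ n : Oˣ) : O) = ((1 : Oˣ) : O) := by rw [h]
      have h2 : (((u ^ n : Oˣ) : O) : E) = 1 := by rw [h1]; simp
      calc ((u : O) : E) ^ n = (((u : O) ^ n : O) : E) := by push_cast; ring
        _ = (((u ^ n : Oˣ) : O) : E) := by rw [Units.val_pow_eq_pow_val]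
        _ = 1 := h2
    rcases hroots _ ⟨n, hn, hE⟩ with h1 | h1
    · left
      apply Units.ext
      apply Subtype.ext
      simpa using h1
    · right
      apply Units.ext
      apply Subtype.ext
      simpa using h1
  have htmem : Additive.ofMul (-1 : Oˣ) ∈ NO := by
    refine (aux_mem_torsion_iff _).mpr ⟨2, two_pos, ?_⟩
    show (-1 : Oˣ) ^ 2 = 1
    rw [pow_two, neg_one_mul, neg_neg]
  let t : NO := ⟨Additive.ofMul (-1 : Oˣ), htmem⟩
  have ht2 : t + t = 0 := by
    apply Subtype.ext
    show Additive.ofMul (-1 : Oˣ) + Additive.ofMul (-1 : Oˣ) = 0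
    rw [← ofMul_mul, neg_one_mul, neg_neg]
    rfl
  have ht0 : t ≠ 0 := by
    intro h
    exact hne (ofMul_eq_zero.mp (congrArg Subtype.val h))
  have hall : ∀ a : NO, a = 0 ∨ a = t := by
    rintro ⟨x, hx⟩
    obtain ⟨n, hn, h⟩ := (aux_mem_torsion_iff x).mp hx
    rcases htor_char (Additive.toMul x) ⟨n, hn, h⟩ with h1 | h1
    · left
      apply Subtype.ext
      show x = 0
      exact toMul_eq_one.mp h1
    · right
      apply Subtype.ext
      show x = Additive.ofMul (-1 : Oˣ)
      rw [← h1]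
      exact (ofMul_toMul x).symm
  obtain ⟨eN⟩ := aux_zmod2 t ht2 ht0 hall
  -- splitting off the torsion
  haveI : Module.IsTorsionFree ℤ QO := inferInstance
  haveI : Module.Free ℤ QO := inferInstance
  haveI : Module.Projective ℤ QO := inferInstance
  obtain ⟨eSplit⟩ := aux_split NO
  -- assembling the final equivalence
  let bQO : Basis (Fin (s - 1)) ℤ QO := Module.finBasisOfFinrankEq ℤ QO hrankQO
  let eF : QO ≃ₗ[ℤ] (Fin (s - 1) → ℤ) := bQO.equivFun
  let eAdd : MO ≃+ (ZMod 2 × (Fin (s - 1) → ℤ)) :=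
    eSplit.toAddEquiv.trans (AddEquiv.prodCongr eN eF.toAddEquiv)
  exact ⟨((MulEquiv.multiplicativeAdditive Oˣ).symm).trans (AddEquiv.toMultiplicative eAdd)⟩
end
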